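/- Let T ∈ L(H) be an operator on a separable infinite-dimensional complex Hilbert space H. If the interior of the point spectrum σ_p(T; H) = {λ ∈ ℂ : Ker(T − λI) ≠ {0}} is empty, then T is not a universal operator. -/

import Mathlib

noncomputable section

namespace UniversalAux

lemma mem_shift (f : lp (fun _ : ℕ => ℂ) 2) : Memℓp (fun n => (f : ℕ → ℂ) (n + 1)) 2 := by
  apply memℓp_gen
  exact ((lp.memℓp f).summable (by norm_num)).comp_injective (add_left_injective 1)

def shiftL : lp (fun _ : ℕ => ℂ) 2 →ₗ[ℂ] lp (fun _ : ℕ => ℂ) 2 where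
  toFun f := ⟨fun n => (f : ℕ → ℂ) (n + 1), mem_shift f⟩
  map_add' f g := by apply Subtype.ext; funext n; simp [lp.coeFn_add]; rfl
  map_smul' c f := by apply Subtype.ext; funext n; simp [lp.coeFn_smul]

lemma shiftL_norm (f : lp (fun _ : ℕ => ℂ) 2) : ‖shiftL f‖ ≤ 1 * ‖f‖ := by
  rw [one_mul]
  apply lp.norm_le_of_tsum_le (by norm_num) (norm_nonneg f)
  rw [lp.norm_rpow_eq_tsum (by norm_num) f]
  exact Summable.tsum_le_tsum_of_inj (fun n => n + 1) (add_left_injective 1)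
    (fun c _ => by positivity) (fun n => le_refl _)
    ((lp.memℓp (shiftL f)).summable (by norm_num))
    ((lp.memℓp f).summable (by norm_num))

def shiftCLM : lp (fun _ : ℕ => ℂ) 2 →L[ℂ] lp (fun _ : ℕ => ℂ) 2 :=
  shiftL.mkContinuous 1 shiftL_norm

@[simp] lemma shiftCLM_apply (f : lp (fun _ : ℕ => ℂ) 2) (n : ℕ) :
    (shiftCLM f : ℕ → ℂ) n = (f : ℕ → ℂ) (n + 1) := rfl

lemma mem_geom {z : ℂ} (hz : ‖z‖ < 1) : Memℓp (fun n => z ^ n) 2 := by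
  apply memℓp_gen
  have h : Summable fun n : ℕ => (‖z‖ ^ 2) ^ n :=
    summable_geometric_of_lt_one (by positivity) (by nlinarith [norm_nonneg z])
  convert h using 2 with n
  rw [ENNReal.toReal_ofNat, norm_pow]
  rw [show ((2:ℝ)) = ((2:ℕ):ℝ) by norm_num, Real.rpow_natCast]
  ring

lemma exists_hilbertBasis_nat (H : Type*) [NormedAddCommGroup H] [InnerProductSpace ℂ H]
    [CompleteSpace H] [TopologicalSpace.SeparableSpace H] (hinf : ¬ FiniteDimensional ℂ H) :
    Nonempty (HilbertBasis ℕ ℂ H) := by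
  obtain ⟨w, b, hb⟩ := exists_hilbertBasis ℂ H
  have hw_orth : Orthonormal ℂ ((↑) : w → H) := hb ▸ b.orthonormal
  have hsep : ∀ x y : w, x ≠ y → (1 : ℝ) ≤ dist (x : H) (y : H) := by
    intro x y hxy
    have h0 : (inner ℂ (x : H) (y : H) : ℂ) = 0 := hw_orth.2 hxy
    have h2 : ‖(x : H) - (y : H)‖ ^ 2 = 2 := by
      rw [@norm_sub_sq ℂ]
      simp [h0, hw_orth.1 x, hw_orth.1 y]; norm_num
    rw [dist_eq_norm]
    nlinarith [norm_nonneg ((x : H) - (y : H))]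
  have hw_c : Countable w := by
    obtain ⟨s, hsc, hsd⟩ := TopologicalSpace.exists_countable_dense H
    haveI := hsc.to_subtype
    have hch : ∀ x : w, ∃ y : s, dist (x : H) (y : H) < 1 / 2 := by
      intro x
      obtain ⟨y, hy₁, hy₂⟩ := Metric.dense_iff.1 hsd (x : H) (1 / 2) (by norm_num)
      exact ⟨⟨y, hy₂⟩, by simpa [Metric.mem_ball, dist_comm] using hy₁⟩
    choose g hg using hch
    have hg_inj : Function.Injective g := by
      intro x y hxy
      by_contra hne
      have h1 := hsep x y hne
      have h2 := dist_triangle (x : H) ((g x : H)) ((y : H))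
      have h3 := hg x
      have h4 := hg y
      rw [hxy] at h2 h3
      rw [dist_comm] at h4
      linarith
    exact hg_inj.countable
  have hw_inf : Infinite w := by
    by_contra hfin
    rw [not_infinite_iff_finite] at hfin
    have hwfin : w.Finite := Set.finite_coe_iff.1 hfin
    apply hinf
    haveI : FiniteDimensional ℂ (Submodule.span ℂ w) := FiniteDimensional.span_of_finite ℂ hwfin
    have hcl : (Submodule.span ℂ w).topologicalClosure = Submodule.span ℂ w := by
      apply le_antisymm _ (Submodule.le_topologicalClosure _)
      intro x hx
      exact (Submodule.closed_of_finiteDimensional (Submodule.span ℂ w)).closure_subset_iff.2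
        (fun y hy => hy) hx
    have hds := b.dense_span
    rw [hb, Subtype.range_coe] at hds
    rw [hcl] at hds
    rw [hds] at this
    exact Module.Finite.equiv (Submodule.topEquiv)
  obtain ⟨d⟩ := nonempty_denumerable w
  let e : ℕ ≃ w := (Denumerable.eqv w).symm
  have horth : Orthonormal ℂ (fun n : ℕ => ((e n : w) : H)) :=
    hw_orth.comp e e.injective
  have hrange : Set.range (fun n : ℕ => ((e n : w) : H)) = w := by
    have : Set.range (fun n : ℕ => ((e n : w) : H)) = (↑) '' (Set.range e) := by
      rw [← Set.range_comp]; rfl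
    rw [this, e.range_eq_univ, Set.image_univ, Subtype.range_coe]
  refine ⟨HilbertBasis.mk horth ?_⟩
  rw [hrange]
  have hds := b.dense_span
  rw [hb, Subtype.range_coe] at hds
  rw [hds]

end UniversalAux

/-- Universal operator on a complex Hilbert space. -/
def IsUniversal {H : Type*} [NormedAddCommGroup H] [InnerProductSpace ℂ H]
    (U : H →L[ℂ] H) : Prop :=
  ∀ T : H →L[ℂ] H, ∃ M : Submodule ℂ H, IsClosed (M : Set H) ∧ (∀ x ∈ M, U x ∈ M) ∧
    ∃ c : ℂ, c ≠ 0 ∧ ∃ J : H ≃L[ℂ] M, ∀ x : H, U (J x : H) = c • ((J (T x) : H))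

/-- The point spectrum of an operator: the set of its eigenvalues. -/
def pointSpectrum {H : Type*} [NormedAddCommGroup H] [InnerProductSpace ℂ H]
    (T : H →L[ℂ] H) : Set ℂ :=
  {z : ℂ | LinearMap.ker ((T - z • (1 : H →L[ℂ] H) : H →L[ℂ] H) : H →ₗ[ℂ] H) ≠ ⊥}

/-- If the point spectrum of `T` has empty interior, then `T` is not universal. -/
theorem not_universal_of_interior_pointSpectrum_empty {H : Type*} [NormedAddCommGroup H]
    [InnerProductSpace ℂ H] [CompleteSpace H] [TopologicalSpace.SeparableSpace H]
    (hinf : ¬ FiniteDimensional ℂ H)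
    (T : H →L[ℂ] H) (h : interior (pointSpectrum T) = ∅) :
    ¬ IsUniversal T := by
  intro hU
  obtain ⟨b⟩ := UniversalAux.exists_hilbertBasis_nat H hinf
  -- the backward shift operator on H, transported from ℓ²
  set R : H ≃L[ℂ] lp (fun _ : ℕ => ℂ) 2 := b.repr.toContinuousLinearEquiv with hR
  set S : H →L[ℂ] H :=
    (R.symm.toContinuousLinearMap.comp UniversalAux.shiftCLM).comp R.toContinuousLinearMap
    with hS
  -- eigenvectors of S for every z in the open unit ball
  have hSeig : ∀ z : ℂ, ‖z‖ < 1 → ∃ v : H, v ≠ 0 ∧ S v = z • v := by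
    intro z hz
    set g : lp (fun _ : ℕ => ℂ) 2 := ⟨fun n => z ^ n, UniversalAux.mem_geom hz⟩ with hg
    have hg0 : g ≠ 0 := by
      intro hg0
      have : (g : ℕ → ℂ) 0 = 0 := by rw [hg0]; rfl
      simp [hg] at this
    have hshift : UniversalAux.shiftCLM g = z • g := by
      apply Subtype.ext; funext n
      have h1 : (UniversalAux.shiftCLM g : ℕ → ℂ) n = z ^ (n + 1) := rfl
      rw [h1, lp.coeFn_smul, Pi.smul_apply]
      show z ^ (n + 1) = z • z ^ n
      rw [pow_succ, smul_eq_mul]; ring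
    refine ⟨R.symm g, ?_, ?_⟩
    · intro h0
      apply hg0
      have := congrArg R h0
      rw [R.apply_symm_apply] at this
      simpa using this
    · have : S (R.symm g) = R.symm (UniversalAux.shiftCLM (R (R.symm g))) := rfl
      rw [this, R.apply_symm_apply, hshift, map_smul]
  obtain ⟨M, _hMc, _hMi, c, hc, J, hJ⟩ := hU S
  have hcpos : (0 : ℝ) < ‖c‖ := norm_pos_iff.2 hc
  have hsub : Metric.ball (0 : ℂ) ‖c‖ ⊆ pointSpectrum T := by
    intro μ hμ
    rw [Metric.mem_ball, dist_zero_right] at hμ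
    set z : ℂ := μ / c with hz
    have hz1 : ‖z‖ < 1 := by
      rw [hz, norm_div, div_lt_one hcpos]; exact hμ
    obtain ⟨v, hv0, hv⟩ := hSeig z hz1
    have hw0 : ((J v : M) : H) ≠ 0 := by
      intro h0
      apply hv0
      have : (J v : M) = 0 := Subtype.ext h0
      simpa using congrArg J.symm this
    have hTw : T ((J v : M) : H) = μ • ((J v : M) : H) := by
      have h1 := hJ v
      rw [hv, map_smul] at h1
      rw [h1, Submodule.coe_smul, smul_smul, hz, mul_div_cancel₀ μ hc]
    show LinearMap.ker ((T - μ • (1 : H →L[ℂ] H) : H →L[ℂ] H) : H →ₗ[ℂ] H) ≠ ⊥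
    rw [Submodule.ne_bot_iff]
    refine ⟨((J v : M) : H), ?_, hw0⟩
    rw [LinearMap.mem_ker]
    show (T - μ • (1 : H →L[ℂ] H)) ((J v : M) : H) = 0
    rw [ContinuousLinearMap.sub_apply, ContinuousLinearMap.smul_apply,
      ContinuousLinearMap.one_apply, hTw, sub_self]
  have h0mem : (0 : ℂ) ∈ interior (pointSpectrum T) :=
    interior_maximal hsub Metric.isOpen_ball (Metric.mem_ball_self hcpos)
  rw [h] at h0mem
  exact h0mem

end
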